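/- Let f be a continuous piecewise linear function on [-r, r] (r > 0) with distinct roots a_μ and poles b_ν in (-r, r) with multiplicities τ_f. Then for any x ∈ (-r, r): f(x) = (1/2)(f(r)+f(-r)) + (x/(2r))(f(r)-f(-r)) - (1/(2r)) ∑_{|a_μ|<r} τ_f(a_μ)(r² - |a_μ - x| r - a_μ x) + (1/(2r)) ∑_{|b_ν|<r} τ_f(b_ν)(r² - |b_ν - x| r - b_ν x). -/

import Mathlib

open Set

/-- `f` is tropical meromorphic: continuous, piecewise linear with one-sided
slopes around every point, and `ω x` is the jump of the derivative at `x`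
(right slope minus left slope); the jump points are discrete. -/
structure TropicalMero (f : ℝ → ℝ) (ω : ℝ → ℝ) : Prop where
  cont : Continuous f
  slopes : ∀ x : ℝ, ∃ ε > 0, ∃ sl sr : ℝ,
    (∀ y ∈ Set.Ioc (x - ε) x, f y = f x + sl * (y - x)) ∧
    (∀ y ∈ Set.Ico x (x + ε), f y = f x + sr * (y - x)) ∧
    sr - sl = ω x
  discrete : ∀ r : ℝ, 0 < r → (Function.support ω ∩ Set.Ioo (-r) r).Finite

/-- Tropical proximity function. -/
noncomputable def mfun (f : ℝ → ℝ) (r : ℝ) : ℝ :=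
  (max (f r) 0 + max (f (-r)) 0) / 2

/-- Tropical counting function for poles (points with `ω b < 0`) in `(-r, r)`. -/
noncomputable def Nfun (ω : ℝ → ℝ) (r : ℝ) : ℝ :=
  (1 / 2) * ∑ᶠ b ∈ {b : ℝ | b ∈ Set.Ioo (-r) r ∧ ω b < 0}, (-(ω b)) * (r - |b|)

/-- Tropical characteristic function. -/
noncomputable def Tfun (f ω : ℝ → ℝ) (r : ℝ) : ℝ := mfun f r + Nfun ω r

/-- Tropical Poisson–Jensen formula. -/
theorem stmt2 (f ω : ℝ → ℝ) (h : TropicalMero f ω) (r x : ℝ) (hr : 0 < r)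
    (hx : x ∈ Set.Ioo (-r) r) :
    f x = (f r + f (-r)) / 2 + (x / (2 * r)) * (f r - f (-r))
      - (1 / (2 * r)) * ∑ᶠ a ∈ {a : ℝ | a ∈ Set.Ioo (-r) r ∧ 0 < ω a},
          ω a * (r ^ 2 - |a - x| * r - a * x)
      + (1 / (2 * r)) * ∑ᶠ b ∈ {b : ℝ | b ∈ Set.Ioo (-r) r ∧ ω b < 0},
          (-(ω b)) * (r ^ 2 - |b - x| * r - b * x) := by
  classical
  have hcont := h.cont
  have hs_fin := h.discrete r hr
  set s : Finset ℝ := hs_fin.toFinset with hs_def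
  have hmem_s : ∀ c : ℝ, c ∈ s ↔ ω c ≠ 0 ∧ c ∈ Set.Ioo (-r) r := by
    intro c
    simp [hs_def, Set.Finite.mem_toFinset, Function.mem_support]
  set Φ : ℝ → ℝ := fun z => ∑ c ∈ s, ω c * (r ^ 2 - |c - z| * r - c * z) with hΦ_def
  have hΦcont : Continuous Φ := by
    apply continuous_finset_sum
    intro c _
    exact continuous_const.mul
      ((continuous_const.sub ((continuous_const.sub continuous_id).abs.mul
        continuous_const)).sub (continuous_const.mul continuous_id))
  set g : ℝ → ℝ := fun z => f z + 1 / (2 * r) * Φ z with hg_def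
  have hgcont : Continuous g := hcont.add (continuous_const.mul hΦcont)
  have h2r : (2 * r : ℝ) ≠ 0 := by positivity
  -- affine functions have derivatives
  have haff : ∀ A q z0 p : ℝ, HasDerivAt (fun w => A + q * (w - z0)) q p := by
    intro A q z0 p
    simpa using (((hasDerivAt_id p).sub_const z0).const_mul q).const_add A
  -- local affinity of g
  have key : ∀ y ∈ Set.Ioo (-r) r, ∃ ε > 0, ∃ m : ℝ,
      ∀ z ∈ Set.Ioo (y - ε) (y + ε), g z = g y + m * (z - y) := by
    intro y hy
    obtain ⟨ε₀, hε₀, sl, sr, hL, hR, hωy⟩ := h.slopes y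
    obtain ⟨δ, hδ, hδ'⟩ : ∃ δ > 0, ∀ c ∈ s, c ≠ y → δ ≤ |c - y| := by
      rcases (s.erase y).eq_empty_or_nonempty with he | hne
      · exact ⟨1, one_pos, fun c hc hcy =>
          absurd (Finset.mem_erase.2 ⟨hcy, hc⟩) (by simp [he])⟩
      · refine ⟨(s.erase y).inf' hne fun c => |c - y|, ?_, ?_⟩
        · exact (Finset.lt_inf'_iff _).2 fun c hc =>
            abs_pos.2 (sub_ne_zero.2 (Finset.mem_erase.1 hc).1)
        · intro c hc hcy
          exact Finset.inf'_le _ (Finset.mem_erase.2 ⟨hcy, hc⟩)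
    set ε := min ε₀ δ with hε_def
    have hε : 0 < ε := lt_min hε₀ hδ
    have hεε₀ : ε ≤ ε₀ := min_le_left _ _
    have hεδ : ε ≤ δ := min_le_right _ _
    have hleft : ∀ z ∈ Set.Ioc (y - ε) y,
        g z = g y + (sl + 1 / (2 * r) *
          ∑ c ∈ s, ω c * (if y ≤ c then r - c else -(r + c))) * (z - y) := by
      intro z hz
      have hfz : f z = f y + sl * (z - y) :=
        hL z ⟨lt_of_le_of_lt (by linarith) hz.1, hz.2⟩
      have hΦz : Φ z = Φ y +
          (∑ c ∈ s, ω c * (if y ≤ c then r - c else -(r + c))) * (z - y) := by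
        simp only [hΦ_def]
        rw [Finset.sum_mul, ← Finset.sum_add_distrib]
        apply Finset.sum_congr rfl
        intro c hc
        by_cases hyc : y ≤ c
        · have h1 : |c - z| = c - z := abs_of_nonneg (by linarith [hz.2])
          have h2 : |c - y| = c - y := abs_of_nonneg (by linarith)
          rw [h1, h2, if_pos hyc]; ring
        · push_neg at hyc
          have hle : δ ≤ |c - y| := hδ' c hc (ne_of_lt hyc)
          have h2 : |c - y| = y - c := by
            rw [abs_sub_comm]; exact abs_of_nonneg (by linarith)
          have hcz : c < z := by
            rw [h2] at hle
            have := hz.1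
            linarith
          have h1 : |c - z| = z - c := by
            rw [abs_sub_comm]; exact abs_of_nonneg (by linarith)
          rw [h1, h2, if_neg (not_le.2 hyc)]; ring
      simp only [hg_def]
      rw [hfz, hΦz]; ring
    have hright : ∀ z ∈ Set.Ico y (y + ε),
        g z = g y + (sr + 1 / (2 * r) *
          ∑ c ∈ s, ω c * (if y < c then r - c else -(r + c))) * (z - y) := by
      intro z hz
      have hfz : f z = f y + sr * (z - y) :=
        hR z ⟨hz.1, lt_of_lt_of_le hz.2 (by linarith)⟩
      have hΦz : Φ z = Φ y +
          (∑ c ∈ s, ω c * (if y < c then r - c else -(r + c))) * (z - y) := by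
        simp only [hΦ_def]
        rw [Finset.sum_mul, ← Finset.sum_add_distrib]
        apply Finset.sum_congr rfl
        intro c hc
        by_cases hyc : y < c
        · have hle : δ ≤ |c - y| := hδ' c hc (ne_of_gt hyc)
          have h2 : |c - y| = c - y := abs_of_nonneg (by linarith)
          have hzc : z < c := by
            rw [h2] at hle
            have := hz.2
            linarith
          have h1 : |c - z| = c - z := abs_of_nonneg (by linarith)
          rw [h1, h2, if_pos hyc]; ring
        · push_neg at hyc
          have h1 : |c - z| = z - c := by
            rw [abs_sub_comm]; exact abs_of_nonneg (by linarith [hz.1])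
          have h2 : |c - y| = y - c := by
            rw [abs_sub_comm]; exact abs_of_nonneg (by linarith)
          rw [h1, h2, if_neg (not_lt.2 hyc)]; ring
      simp only [hg_def]
      rw [hfz, hΦz]; ring
    have hMlr : sl + 1 / (2 * r) * ∑ c ∈ s, ω c * (if y ≤ c then r - c else -(r + c))
        = sr + 1 / (2 * r) * ∑ c ∈ s, ω c * (if y < c then r - c else -(r + c)) := by
      have hAB : (∑ c ∈ s, ω c * (if y ≤ c then r - c else -(r + c)))
          - (∑ c ∈ s, ω c * (if y < c then r - c else -(r + c))) = ω y * (2 * r) := by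
        rw [← Finset.sum_sub_distrib]
        have hterm : ∀ c ∈ s,
            (ω c * (if y ≤ c then r - c else -(r + c))
              - ω c * (if y < c then r - c else -(r + c)))
            = if c = y then ω y * (2 * r) else 0 := by
          intro c hc
          rcases lt_trichotomy c y with h1 | h1 | h1
          · rw [if_neg (not_le.2 h1), if_neg (not_lt.2 h1.le), if_neg (ne_of_lt h1)]; ring
          · subst h1; rw [if_pos le_rfl, if_neg (lt_irrefl _), if_pos rfl]; ring
          · rw [if_pos h1.le, if_pos h1, if_neg (ne_of_gt h1)]; ring
        rw [Finset.sum_congr rfl hterm, Finset.sum_ite_eq' s y (fun _ => ω y * (2 * r))]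
        by_cases hys : y ∈ s
        · rw [if_pos hys]
        · rw [if_neg hys]
          have hω0 : ω y = 0 := by
            by_contra hne
            exact hys ((hmem_s y).2 ⟨hne, hy⟩)
          rw [hω0]; ring
      have h1 : 1 / (2 * r) * (ω y * (2 * r)) = ω y := by field_simp
      linear_combination (-1 : ℝ) * hωy + (1 / (2 * r)) * hAB + h1
    refine ⟨ε, hε, sl + 1 / (2 * r) *
      ∑ c ∈ s, ω c * (if y ≤ c then r - c else -(r + c)), ?_⟩
    intro z hz
    rcases le_or_gt z y with hzy | hzy
    · exact hleft z ⟨hz.1, hzy⟩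
    · rw [hMlr]; exact hright z ⟨hzy.le, hz.2⟩
  -- derivative facts
  have key2 : ∀ y ∈ Set.Ioo (-r) r,
      HasDerivAt g (deriv g y) y ∧ (∀ᶠ z in nhds y, deriv g z = deriv g y) := by
    intro y hy
    obtain ⟨ε, hε, m, hm⟩ := key y hy
    have hyI : y ∈ Set.Ioo (y - ε) (y + ε) := ⟨by linarith, by linarith⟩
    have hd : ∀ z ∈ Set.Ioo (y - ε) (y + ε), HasDerivAt g m z := by
      intro z hz
      apply (haff (g y) m y z).congr_of_eventuallyEq
      filter_upwards [isOpen_Ioo.mem_nhds hz] with w hw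
      exact hm w hw
    have hderiveq : ∀ z ∈ Set.Ioo (y - ε) (y + ε), deriv g z = m :=
      fun z hz => (hd z hz).deriv
    have hmy : deriv g y = m := hderiveq y hyI
    constructor
    · rw [hmy]; exact hd y hyI
    · filter_upwards [isOpen_Ioo.mem_nhds hyI] with z hz
      rw [hderiveq z hz, hmy]
  have hD0 : ∀ y ∈ Set.Ioo (-r) r, HasDerivAt (deriv g) 0 y := fun y hy =>
    (hasDerivAt_const y (deriv g y)).congr_of_eventuallyEq ((key2 y hy).2)
  have hDcont : ∀ y ∈ Set.Ioo (-r) r, ContinuousAt (deriv g) y :=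
    fun y hy => (hD0 y hy).continuousAt
  have hDconst : ∀ y ∈ Set.Ioo (-r) r, deriv g y = deriv g x := by
    intro y hy
    rcases le_total x y with hxy | hxy
    · have hsub : Set.Icc x y ⊆ Set.Ioo (-r) r := Set.Icc_subset_Ioo hx.1 hy.2
      exact constant_of_has_deriv_right_zero
        (fun z hz => (hDcont z (hsub hz)).continuousWithinAt)
        (fun z hz => (hD0 z (hsub ⟨hz.1, hz.2.le⟩)).hasDerivWithinAt)
        y (Set.right_mem_Icc.2 hxy)
    · have hsub : Set.Icc y x ⊆ Set.Ioo (-r) r := Set.Icc_subset_Ioo hy.1 hx.2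
      exact (constant_of_has_deriv_right_zero
        (fun z hz => (hDcont z (hsub hz)).continuousWithinAt)
        (fun z hz => (hD0 z (hsub ⟨hz.1, hz.2.le⟩)).hasDerivWithinAt)
        x (Set.right_mem_Icc.2 hxy)).symm
  set m := deriv g x with hm_def
  have hgderiv : ∀ z ∈ Set.Ioo (-r) r, HasDerivAt g m z := by
    intro z hz
    have h1 := (key2 z hz).1
    rwa [hDconst z hz] at h1
  have hgy : ∀ y ∈ Set.Ioo (-r) r, g y = g x + m * (y - x) := by
    intro y hy
    rcases le_total x y with hxy | hxy
    · have hsub : Set.Icc x y ⊆ Set.Ioo (-r) r := Set.Icc_subset_Ioo hx.1 hy.2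
      have := eq_of_has_deriv_right_eq (f' := fun _ => m) (a := x) (b := y)
        (fun z hz => (hgderiv z (hsub ⟨hz.1, hz.2.le⟩)).hasDerivWithinAt)
        (fun z _ => (haff (g x) m x z).hasDerivWithinAt)
        hgcont.continuousOn
        ((continuous_const.add (continuous_const.mul
          (continuous_id.sub continuous_const))).continuousOn)
        (by simp)
      simpa using this y (Set.right_mem_Icc.2 hxy)
    · have hsub : Set.Icc y x ⊆ Set.Ioo (-r) r := Set.Icc_subset_Ioo hy.1 hx.2
      have := eq_of_has_deriv_right_eq (f' := fun _ => m) (a := y) (b := x)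
        (fun z hz => (hgderiv z (hsub ⟨hz.1, hz.2.le⟩)).hasDerivWithinAt)
        (fun z _ => (haff (g y) m y z).hasDerivWithinAt)
        hgcont.continuousOn
        ((continuous_const.add (continuous_const.mul
          (continuous_id.sub continuous_const))).continuousOn)
        (by simp)
      have hgx := this x (Set.right_mem_Icc.2 hxy)
      linear_combination -hgx
  -- boundary values
  have hgr : g r = g x + m * (r - x) := by
    have h1 : Filter.Tendsto g (nhdsWithin r (Set.Iio r)) (nhds (g r)) :=
      (hgcont.tendsto r).mono_left nhdsWithin_le_nhds
    have h2 : Filter.Tendsto (fun z => g x + m * (z - x)) (nhdsWithin r (Set.Iio r))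
        (nhds (g x + m * (r - x))) :=
      ((continuous_const.add (continuous_const.mul
        (continuous_id.sub continuous_const))).tendsto r).mono_left nhdsWithin_le_nhds
    have h3 : g =ᶠ[nhdsWithin r (Set.Iio r)] fun z => g x + m * (z - x) := by
      filter_upwards [Ioo_mem_nhdsLT_of_mem
        (⟨by linarith, le_refl r⟩ : r ∈ Set.Ioc (-r) r)] with z hz
      exact hgy z hz
    exact tendsto_nhds_unique (h1.congr' h3) h2
  have hgnr : g (-r) = g x + m * (-r - x) := by
    have h1 : Filter.Tendsto g (nhdsWithin (-r) (Set.Ioi (-r))) (nhds (g (-r))) :=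
      (hgcont.tendsto (-r)).mono_left nhdsWithin_le_nhds
    have h2 : Filter.Tendsto (fun z => g x + m * (z - x)) (nhdsWithin (-r) (Set.Ioi (-r)))
        (nhds (g x + m * (-r - x))) :=
      ((continuous_const.add (continuous_const.mul
        (continuous_id.sub continuous_const))).tendsto (-r)).mono_left nhdsWithin_le_nhds
    have h3 : g =ᶠ[nhdsWithin (-r) (Set.Ioi (-r))] fun z => g x + m * (z - x) := by
      filter_upwards [Ioo_mem_nhdsGT_of_mem
        (⟨le_refl (-r), by linarith⟩ : (-r) ∈ Set.Ico (-r) r)] with z hz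
      exact hgy z hz
    exact tendsto_nhds_unique (h1.congr' h3) h2
  have hΦr : Φ r = 0 := by
    apply Finset.sum_eq_zero
    intro c hc
    have hc' := ((hmem_s c).1 hc).2
    have habs : |c - r| = r - c := by
      rw [abs_sub_comm]; exact abs_of_nonneg (by linarith [hc'.2])
    rw [habs]; ring
  have hΦnr : Φ (-r) = 0 := by
    apply Finset.sum_eq_zero
    intro c hc
    have hc' := ((hmem_s c).1 hc).2
    have habs : |c - (-r)| = c + r := by
      rw [sub_neg_eq_add]; exact abs_of_nonneg (by linarith [hc'.1])
    rw [habs]; ring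
  have hfr : f r = g x + m * (r - x) := by
    rw [← hgr]; simp [hg_def, hΦr]
  have hfnr : f (-r) = g x + m * (-r - x) := by
    rw [← hgnr]; simp [hg_def, hΦnr]
  have hgx : 2 * r * g x = 2 * r * f x + Φ x := by
    simp only [hg_def]; field_simp
  -- convert the finsums
  have hposset : {a : ℝ | a ∈ Set.Ioo (-r) r ∧ 0 < ω a}
      = ↑(s.filter fun a => 0 < ω a) := by
    ext a
    simp only [Finset.coe_filter, Set.mem_setOf_eq, hmem_s]
    constructor
    · rintro ⟨h1, h2⟩; exact ⟨⟨ne_of_gt h2, h1⟩, h2⟩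
    · rintro ⟨⟨_, h1⟩, h2⟩; exact ⟨h1, h2⟩
  have hnegset : {b : ℝ | b ∈ Set.Ioo (-r) r ∧ ω b < 0}
      = ↑(s.filter fun b => ω b < 0) := by
    ext b
    simp only [Finset.coe_filter, Set.mem_setOf_eq, hmem_s]
    constructor
    · rintro ⟨h1, h2⟩; exact ⟨⟨ne_of_lt h2, h1⟩, h2⟩
    · rintro ⟨⟨_, h1⟩, h2⟩; exact ⟨h1, h2⟩
  rw [hposset, hnegset, finsum_mem_coe_finset, finsum_mem_coe_finset]
  have hsplit : (∑ c ∈ s.filter (fun c => 0 < ω c), ω c * (r ^ 2 - |c - x| * r - c * x))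
      + (∑ c ∈ s.filter (fun c => ω c < 0), ω c * (r ^ 2 - |c - x| * r - c * x))
      = Φ x := by
    simp only [hΦ_def]
    rw [← Finset.sum_filter_add_sum_filter_not s (fun c => 0 < ω c)]
    congr 1
    apply Finset.sum_congr _ fun _ _ => rfl
    apply Finset.filter_congr
    intro c hc
    have hne := ((hmem_s c).1 hc).1
    exact ⟨fun h1 => not_lt.2 h1.le, fun h2 => lt_of_le_of_ne (not_lt.1 h2) hne⟩
  have hneg_rw : (∑ c ∈ s.filter (fun c => ω c < 0),
        (-(ω c)) * (r ^ 2 - |c - x| * r - c * x))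
      = - ∑ c ∈ s.filter (fun c => ω c < 0), ω c * (r ^ 2 - |c - x| * r - c * x) := by
    simp [neg_mul]
  have h1 : 1 / (2 * r) * (2 * r) = 1 := by field_simp
  have hm1 : f r + f (-r) = 2 * g x - 2 * m * x := by linear_combination hfr + hfnr
  have hm2 : f r - f (-r) = 2 * m * r := by linear_combination hfr - hfnr
  have hhalf : (f r + f (-r)) / 2 = g x - m * x := by rw [hm1]; ring
  have hxr : x / (2 * r) * (f r - f (-r)) = m * x := by
    linear_combination (x / (2 * r)) * hm2 + (m * x) * h1
  rw [hneg_rw, hhalf, hxr]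
  linear_combination (1 / (2 * r)) * hsplit - (1 / (2 * r)) * hgx + (g x - f x) * h1
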